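/- arXiv:1606.06570 — 2 statements merged into one kernel-verified Lean document; each statement's English description precedes it below -/
import Mathlib

section
/- Let C be a circuit and (x^(i))_{i ∈ [ℓ+1]} a pivotal sequence of states of C. Then there exists a pivotal sequence (y^(j))_{j ∈ [ℓ'+1]} of states of C such that each y^(j) is a successor state of some x^(i), y^(0) is a successor state of x^(0), and y^(ℓ') is a successor state of x^(ℓ). -/
set_option linter.unusedVariables false

attribute [local instance] Classical.propDecidable

/-- Signal values: stable `zero`, `one`, and metastable `meta`. -/
inductive BM : Type
  | zero
  | one
  | meta'
  deriving DecidableEq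

/-- Embedding of stable Boolean values into `BM`. -/
def BM.ofBool : Bool → BM
  | false => BM.zero
  | true => BM.one

/-- `inResM x y` means `y ∈ ResM(x)`, the set of partial resolutions of `x`. -/
def inResM {k : ℕ} (x y : Fin k → BM) : Prop :=
  ∀ i, x i = y i ∨ x i = BM.meta'

/-- `inRes x y` means `y ∈ Res(x)`, i.e. `y` is a complete (stable) resolution of `x`. -/
def inRes {k : ℕ} (x y : Fin k → BM) : Prop :=
  inResM x y ∧ ∀ i, y i ≠ BM.meta'

/-- The complete resolutions of `x`, viewed as Boolean words. -/
def boolRes {k : ℕ} (x : Fin k → BM) : Set (Fin k → Bool) :=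
  { z | ∀ i, x i = BM.ofBool (z i) ∨ x i = BM.meta' }

/-- The metastable (Kleene) extension `f_M : BM^k → BM` of a Boolean function
`f : B^k → B`: it outputs a stable value `b` iff all complete resolutions of the
input evaluate to `b` under `f`, and `meta` otherwise. -/
noncomputable def kleene {k : ℕ} (f : (Fin k → Bool) → Bool) (x : Fin k → BM) : BM :=
  if ∀ z ∈ boolRes x, f z = false then BM.zero
  else if ∀ z ∈ boolRes x, f z = true then BM.one
  else BM.meta'

/-- Combinational logic with `m` input nodes: formulas built from inputs,
`BM`-constants (gates of indegree 0), and gates computing the metastable extension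
of a Boolean function of their in-neighbors.  (A DAG evaluates exactly like the
formula obtained by unsharing, so this faithfully captures evaluation of
combinational logic DAGs.) -/
inductive Comb (m : ℕ) : Type
  | input : Fin m → Comb m
  | const : BM → Comb m
  | gate : (j : ℕ) → ((Fin j → Bool) → Bool) → (Fin j → Comb m) → Comb m

/-- Recursive evaluation of combinational logic on input `x ∈ BM^m`. -/
noncomputable def Comb.eval {m : ℕ} (x : Fin m → BM) : Comb m → BM
  | .input i => x i
  | .const b => b
  | .gate _ f cs => kleene f (fun t => (cs t).eval x)

/-- Register types: simple, mask-0, mask-1. -/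
inductive RegType : Type
  | simple
  | mask0
  | mask1
  deriving DecidableEq

/-- `regRead t b (o, b')` holds iff a register of type `t` in state `b` can be read
with read value `o`, moving to state `b'`:  a register in a stable state yields that
state and keeps it; a simple register in state `meta` yields `meta` and stays `meta`;
a mask-`c` register in state `meta` either yields `c` staying in state `meta`, or
yields `meta` changing its state to `1 - c`. -/
def regRead : RegType → BM → BM × BM → Prop
  | _, BM.zero, p => p = (BM.zero, BM.zero)
  | _, BM.one, p => p = (BM.one, BM.one)
  | RegType.simple, BM.meta', p => p = (BM.meta', BM.meta')
  | RegType.mask0, BM.meta', p => p = (BM.zero, BM.meta') ∨ p = (BM.meta', BM.one)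
  | RegType.mask1, BM.meta', p => p = (BM.one, BM.meta') ∨ p = (BM.meta', BM.zero)

/-- A circuit with `m` input, `k` local and `n` output registers: a type for each
register, combinational logic with `m + k` input nodes (one per non-output register)
and `k + n` output nodes (one per non-input register), and an initialization of the
non-input registers. -/
structure Circuit (m k n : ℕ) : Type where
  inType : Fin m → RegType
  locType : Fin k → RegType
  outType : Fin n → RegType
  logic : Fin (k + n) → Comb (m + k)
  init : Fin (k + n) → BM

/-- A state of a circuit: values of input, local, and output registers. -/
structure CState (m k n : ℕ) : Type where
  inp : Fin m → BM
  loc : Fin k → BM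
  out : Fin n → BM

/-- A state as a word in `BM^{m+k+n}`. -/
def CState.toVec {m k n : ℕ} (s : CState m k n) : Fin (m + (k + n)) → BM :=
  Fin.append s.inp (Fin.append s.loc s.out)

/-- Read phase: `o ∈ BM^{m+k}` are possible read values of the non-output registers
in state `s`, and `ι'` the corresponding successor states of the input registers. -/
def ReadRel {m k n : ℕ} (C : Circuit m k n) (s : CState m k n)
    (o : Fin (m + k) → BM) (ι' : Fin m → BM) : Prop :=
  (∀ i : Fin m, regRead (C.inType i) (s.inp i) (o (Fin.castAdd k i), ι' i)) ∧
  (∀ j : Fin k, ∃ st', regRead (C.locType j) (s.loc j) (o (Fin.natAdd m j), st'))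

/-- Evaluation phase: `f^G` applied to the read values. -/
noncomputable def evalLogic {m k n : ℕ} (C : Circuit m k n) (o : Fin (m + k) → BM) :
    Fin (k + n) → BM :=
  fun j => (C.logic j).eval o

/-- `Write^C(s)`: possible values written to the non-input registers. -/
def WriteSet {m k n : ℕ} (C : Circuit m k n) (s : CState m k n) :
    Set (Fin (k + n) → BM) :=
  { w | ∃ o ι', ReadRel C s o ι' ∧ inResM (evalLogic C o) w }

/-- Successor-state relation: read all non-output registers, evaluate the logic,
and write an arbitrary partial resolution of the result to the non-input registers. -/
def Succ {m k n : ℕ} (C : Circuit m k n) (s s' : CState m k n) : Prop :=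
  ∃ o ι', ReadRel C s o ι' ∧ s'.inp = ι' ∧
    inResM (evalLogic C o) (Fin.append s'.loc s'.out)

/-- `reach C r s₀ = S^C_r(s₀)`: states reachable in `r` rounds from `s₀`. -/
def reach {m k n : ℕ} (C : Circuit m k n) : ℕ → CState m k n → Set (CState m k n)
  | 0, s => {s}
  | r + 1, s => { t | ∃ u ∈ reach C r s, Succ C u t }

/-- The initial state of `C` with input `ι`. -/
def initState {m k n : ℕ} (C : Circuit m k n) (ι : Fin m → BM) : CState m k n :=
  ⟨ι, fun j => C.init (Fin.castAdd n j), fun j => C.init (Fin.natAdd k j)⟩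

/-- `C_r(ι)`: possible outputs after `r` rounds on input `ι`. -/
def Cout {m k n : ℕ} (C : Circuit m k n) (r : ℕ) (ι : Fin m → BM) :
    Set (Fin n → BM) :=
  { y | ∃ s ∈ reach C r (initState C ι), y = s.out }

/-- `r` rounds of `C` implement `f` iff `C_r(ι) ⊆ f(ι)` for all inputs `ι`. -/
def Implements {m k n : ℕ} (C : Circuit m k n) (r : ℕ)
    (f : (Fin m → BM) → Set (Fin n → BM)) : Prop :=
  ∀ ι, Cout C r ι ⊆ f ι

/-- All registers of the circuit are simple. -/
def OnlySimple {m k n : ℕ} (C : Circuit m k n) : Prop :=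
  (∀ i, C.inType i = RegType.simple) ∧ (∀ j, C.locType j = RegType.simple) ∧
    (∀ j, C.outType j = RegType.simple)

/-- `Fun_S^r`: functions implementable by `r` rounds of circuits with only simple
registers. -/
def FunS (r m n : ℕ) : Set ((Fin m → BM) → Set (Fin n → BM)) :=
  { f | ∃ k, ∃ C : Circuit m k n, OnlySimple C ∧ Implements C r f }

/-- `Fun_M^r`: functions implementable by `r` rounds of circuits with arbitrary
register types. -/
def FunM (r m n : ℕ) : Set ((Fin m → BM) → Set (Fin n → BM)) :=
  { f | ∃ k, ∃ C : Circuit m k n, Implements C r f }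

/-- A pivotal sequence over `BM^N`: consecutive elements differ in exactly one bit,
and that bit is `meta` in one of the two elements. -/
def PivotalSeq {N ℓ : ℕ} (x : Fin (ℓ + 1) → Fin N → BM) : Prop :=
  ∀ i : Fin ℓ,
    ∃ j : Fin N,
      x i.castSucc j ≠ x i.succ j ∧
      (x i.castSucc j = BM.meta' ∨ x i.succ j = BM.meta') ∧
      ∀ j' : Fin N, x i.castSucc j' ≠ x i.succ j' → j' = j

/-- A function `f : BM^m → Pow(BM^n)` is natural iff it is bit-wise and closed
(a product of component functions each taking values in `{{0}, {1}, BM}`)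
and specific (stabilizing the input restricts the output). -/
def IsNatural {m n : ℕ} (f : (Fin m → BM) → Set (Fin n → BM)) : Prop :=
  (∃ g : Fin n → (Fin m → BM) → Set BM,
      (∀ i x, g i x = {BM.zero} ∨ g i x = {BM.one} ∨ g i x = (Set.univ : Set BM)) ∧
      (∀ x, f x = { y | ∀ i, y i ∈ g i x })) ∧
  (∀ x y, inRes x y → f y ⊆ f x)

/-- The `i`-th component of the metastable closure of `f : B^m → B^n`. -/
noncomputable def mclosureC {m n : ℕ} (f : (Fin m → Bool) → Fin n → Bool)
    (x : Fin m → BM) (i : Fin n) : Set BM :=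
  if ∀ z ∈ boolRes x, f z i = false then {BM.zero}
  else if ∀ z ∈ boolRes x, f z i = true then {BM.one}
  else Set.univ

/-- The metastable closure `[f]_M : BM^m → Pow(BM^n)` of `f : B^m → B^n`. -/
noncomputable def mclosure {m n : ℕ} (f : (Fin m → Bool) → Fin n → Bool)
    (x : Fin m → BM) : Set (Fin n → BM) :=
  { y | ∀ i, y i ∈ mclosureC f x i }

/-! ### Auxiliary development -/

/-- A single pivotal step between two words. -/
def pivStep {N : ℕ} (u v : Fin N → BM) : Prop :=
  ∃ j, u j ≠ v j ∧ (u j = BM.meta' ∨ v j = BM.meta') ∧ ∀ j', u j' ≠ v j' → j' = j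

/-- A pivotal step whose pivot is metastable on the left. -/
def pivStepL {N : ℕ} (u v : Fin N → BM) : Prop :=
  ∃ j, u j ≠ v j ∧ u j = BM.meta' ∧ ∀ j', u j' ≠ v j' → j' = j

lemma pivStep_symm {N : ℕ} {u v : Fin N → BM} (h : pivStep u v) : pivStep v u := by
  obtain ⟨j, h1, h2, h3⟩ := h
  exact ⟨j, h1.symm, h2.symm, fun j' hj' => h3 j' (Ne.symm hj')⟩

lemma pivStep_cases {N : ℕ} {u v : Fin N → BM} (h : pivStep u v) :
    pivStepL u v ∨ pivStepL v u := by
  obtain ⟨j, h1, h2, h3⟩ := h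
  rcases h2 with h2 | h2
  · exact Or.inl ⟨j, h1, h2, h3⟩
  · exact Or.inr ⟨j, h1.symm, h2, fun j' hj' => h3 j' (Ne.symm hj')⟩

lemma inResM_refl {N : ℕ} (u : Fin N → BM) : inResM u u := fun _ => Or.inl rfl

lemma inResM_trans {N : ℕ} {u v w : Fin N → BM} (h1 : inResM u v) (h2 : inResM v w) :
    inResM u w := by
  intro i
  rcases h1 i with h | h
  · rcases h2 i with h' | h'
    · exact Or.inl (h.trans h')
    · exact Or.inr (h.trans h')
  · exact Or.inr h

/-- Pivotal path from `e` to a partial resolution `v` of `e`, staying inside `ResM e`. -/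
lemma resPath {N : ℕ} : ∀ (d : ℕ) (e v : Fin N → BM),
    (Finset.univ.filter fun i => e i ≠ v i).card = d → inResM e v →
    ∃ l : List (Fin N → BM), l.Chain' pivStep ∧ l.head? = some e ∧ l.getLast? = some v ∧
      ∀ w ∈ l, inResM e w := by
  intro d
  induction d with
  | zero =>
    intro e v hc h
    have hev : e = v := by
      funext i
      by_contra hne
      have : i ∈ Finset.univ.filter fun i => e i ≠ v i := by
        simp [hne]
      rw [Finset.card_eq_zero.mp hc] at this
      exact absurd this (Finset.notMem_empty i)
    exact ⟨[e], List.isChain_singleton _, rfl, by simp [hev], by simp [inResM_refl]⟩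
  | succ d ih =>
    intro e v hc h
    have hpos : 0 < (Finset.univ.filter fun i => e i ≠ v i).card := by omega
    obtain ⟨i, hi⟩ := Finset.card_pos.mp hpos
    have hne : e i ≠ v i := (Finset.mem_filter.mp hi).2
    have hM : e i = BM.meta' := by
      rcases h i with h' | h'
      · exact absurd h' hne
      · exact h'
    set e' : Fin N → BM := Function.update e i (v i) with he'
    have hupd_ne : ∀ j, j ≠ i → e' j = e j := fun j hj => Function.update_of_ne hj _ _
    have hupd : e' i = v i := Function.update_self i _ _
    have hcard : (Finset.univ.filter fun j => e' j ≠ v j).card = d := by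
      have : (Finset.univ.filter fun j => e' j ≠ v j)
          = (Finset.univ.filter fun j => e j ≠ v j).erase i := by
        ext j
        simp only [Finset.mem_filter, Finset.mem_erase, Finset.mem_univ, true_and]
        constructor
        · intro hj
          have hji : j ≠ i := by
            intro heq; subst heq; exact hj hupd
          rw [hupd_ne j hji] at hj
          exact ⟨hji, hj⟩
        · intro ⟨hji, hj⟩
          rw [hupd_ne j hji]; exact hj
      rw [this, Finset.card_erase_of_mem hi, hc]; omega
    have hres' : inResM e' v := by
      intro j
      by_cases hj : j = i
      · subst hj; exact Or.inl hupd
      · rw [hupd_ne j hj]; exact h j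
    obtain ⟨l, hch, hh, hl, hm⟩ := ih e' v hcard hres'
    have hee' : inResM e e' := by
      intro j
      by_cases hj : j = i
      · subst hj; exact Or.inr hM
      · exact Or.inl (hupd_ne j hj).symm
    cases l with
    | nil => simp at hh
    | cons a t =>
      have ha : a = e' := by simpa using hh
      refine ⟨e :: a :: t, ?_, rfl, ?_, ?_⟩
      · apply List.isChain_cons_cons.mpr
        refine ⟨?_, hch⟩
        subst ha
        refine ⟨i, ?_, Or.inl hM, ?_⟩
        · rw [hupd]; exact hne
        · intro j' hj'
          by_contra hji
          exact hj' (hupd_ne j' hji).symm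
      · rw [List.getLast?_cons_cons]; exact hl
      · intro x hx
        rcases List.mem_cons.mp hx with hxe | hx
        · rw [hxe]; exact inResM_refl e
        · exact inResM_trans hee' (hm x hx)

/-- Pivotal path between two partial resolutions of `e`, staying inside `ResM e`. -/
lemma pathVia {N : ℕ} (e a b : Fin N → BM) (ha : inResM e a) (hb : inResM e b) :
    ∃ l : List (Fin N → BM), l.Chain' pivStep ∧ l.head? = some a ∧ l.getLast? = some b ∧
      ∀ w ∈ l, inResM e w := by
  obtain ⟨l1, c1, h1, g1, m1⟩ := resPath _ e a rfl ha
  obtain ⟨l2, c2, h2, g2, m2⟩ := resPath _ e b rfl hb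
  cases l2 with
  | nil => simp at h2
  | cons x t =>
    have hx : x = e := by simpa using h2
    have hl1ne : l1 ≠ [] := by
      intro h; rw [h] at h1; simp at h1
    have hrevne : l1.reverse ≠ [] := by
      simpa using hl1ne
    refine ⟨l1.reverse ++ t, ?_, ?_, ?_, ?_⟩
    · refine List.IsChain.append ?_ ((List.isChain_cons.mp c2).2) ?_
      · exact List.isChain_reverse.mpr (c1.imp fun a b hab => pivStep_symm hab)
      · intro p hp q hq
        have hp' : p = e := by
          rw [List.getLast?_reverse, h1] at hp
          exact (by simpa using hp : e = p).symm
        subst hp'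
        have := (List.isChain_cons.mp c2).1 q hq
        rw [hx] at this
        exact this
    · rw [List.head?_append_of_ne_nil _ hrevne, List.head?_reverse, g1]
    · cases t with
      | nil =>
        have hxb : x = b := by simpa using g2
        rw [List.append_nil, List.getLast?_reverse, h1, ← hx, hxb]
      | cons c t' =>
        rw [List.getLast?_append_of_ne_nil _ (by simp), ← List.getLast?_cons_cons (a := x), g2]
    · intro w hw
      rcases List.mem_append.mp hw with hw | hw
      · exact m1 w (List.mem_reverse.mp hw)
      · exact m2 w (List.mem_cons_of_mem x hw)

section CircuitAux

variable {m k n : ℕ}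

/-- Canonical read value of a register of type `t` in state `b`. -/
def canRead : RegType → BM → BM
  | _, BM.zero => BM.zero
  | _, BM.one => BM.one
  | RegType.simple, BM.meta' => BM.meta'
  | RegType.mask0, BM.meta' => BM.zero
  | RegType.mask1, BM.meta' => BM.one

lemma regRead_canRead (t : RegType) (b : BM) : regRead t b (canRead t b, b) := by
  cases t <;> cases b <;> simp [canRead, regRead]

lemma regRead_meta (t : RegType) : ∃ st', regRead t BM.meta' (BM.meta', st') := by
  cases t
  · exact ⟨BM.meta', rfl⟩
  · exact ⟨BM.one, Or.inr rfl⟩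
  · exact ⟨BM.zero, Or.inr rfl⟩

lemma regRead_meta_flip (t : RegType) (b : BM) (ht : t ≠ RegType.simple)
    (hb : b ≠ BM.meta') (hb2 : b ≠ canRead t BM.meta') :
    regRead t BM.meta' (BM.meta', b) := by
  cases t <;> cases b <;> simp_all [canRead, regRead]

/-- Canonical read word of the non-output registers of `C` in state `s`. -/
def canO (C : Circuit m k n) (s : CState m k n) : Fin (m + k) → BM :=
  Fin.append (fun i => canRead (C.inType i) (s.inp i))
    (fun j => canRead (C.locType j) (s.loc j))

lemma canO_readRel (C : Circuit m k n) (s : CState m k n) : ReadRel C s (canO C s) s.inp := by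
  constructor
  · intro i
    rw [canO, Fin.append_left]
    exact regRead_canRead _ _
  · intro j
    refine ⟨s.loc j, ?_⟩
    rw [canO, Fin.append_right]
    exact regRead_canRead _ _

/-- The state with inputs `ι` and non-input registers `w`. -/
def stateOf (ι : Fin m → BM) (w : Fin (k + n) → BM) : CState m k n :=
  ⟨ι, fun j => w (Fin.castAdd n j), fun j => w (Fin.natAdd k j)⟩

lemma append_split (w : Fin (k + n) → BM) :
    Fin.append (fun j => w (Fin.castAdd n j)) (fun j => w (Fin.natAdd k j)) = w := by
  funext x
  refine Fin.addCases (fun i => ?_) (fun i => ?_) x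
  · rw [Fin.append_left]
  · rw [Fin.append_right]

lemma toVec_stateOf (ι : Fin m → BM) (w : Fin (k + n) → BM) :
    (stateOf ι w : CState m k n).toVec = Fin.append ι w :=
  congrArg (Fin.append ι) (append_split w)

lemma toVec_inp (s : CState m k n) (i : Fin m) :
    s.toVec (Fin.castAdd (k + n) i) = s.inp i := by
  rw [CState.toVec, Fin.append_left]

lemma toVec_loc (s : CState m k n) (j : Fin k) :
    s.toVec (Fin.natAdd m (Fin.castAdd n j)) = s.loc j := by
  rw [CState.toVec, Fin.append_right, Fin.append_left]

lemma toVec_out (s : CState m k n) (j : Fin n) :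
    s.toVec (Fin.natAdd m (Fin.natAdd k j)) = s.out j := by
  rw [CState.toVec, Fin.append_right, Fin.append_right]

/-- The canonical write of `C` from state `s`. -/
noncomputable def canW (C : Circuit m k n) (s : CState m k n) : Fin (k + n) → BM :=
  evalLogic C (canO C s)

/-- The canonical successor state of `s`. -/
noncomputable def canSucc (C : Circuit m k n) (s : CState m k n) : CState m k n :=
  stateOf s.inp (canW C s)

lemma succ_of (C : Circuit m k n) (s : CState m k n) {o : Fin (m + k) → BM} {ι' : Fin m → BM}
    (h : ReadRel C s o ι') {w : Fin (k + n) → BM} (hw : inResM (evalLogic C o) w) :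
    Succ C s (stateOf ι' w) := by
  refine ⟨o, ι', h, rfl, ?_⟩
  show inResM _ (Fin.append (fun j => w (Fin.castAdd n j)) (fun j => w (Fin.natAdd k j)))
  rw [append_split]
  exact hw

lemma succ_canSucc (C : Circuit m k n) (s : CState m k n) : Succ C s (canSucc C s) :=
  succ_of C s (canO_readRel C s) (inResM_refl _)

/-! ### Monotonicity of evaluation -/

lemma boolRes_mono {j : ℕ} {x x' : Fin j → BM} (h : inResM x x') : boolRes x' ⊆ boolRes x := by
  intro z hz i
  rcases h i with he | hm
  · rcases hz i with h' | h'
    · rw [he]; exact Or.inl h'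
    · rw [he]; exact Or.inr h'
  · exact Or.inr hm

lemma boolRes_nonempty {j : ℕ} (x : Fin j → BM) : ∃ z, z ∈ boolRes x := by
  refine ⟨fun i => if x i = BM.one then true else false, fun i => ?_⟩
  show x i = BM.ofBool (if x i = BM.one then true else false) ∨ x i = BM.meta'
  cases hx : x i
  · left; rw [if_neg (by intro h; cases h)]; rfl
  · left; rw [if_pos rfl]; rfl
  · exact Or.inr rfl

lemma kleene_mono {j : ℕ} (f : (Fin j → Bool) → Bool) {x x' : Fin j → BM} (h : inResM x x') :
    kleene f x = kleene f x' ∨ kleene f x = BM.meta' := by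
  have hs := boolRes_mono h
  unfold kleene
  by_cases h0 : ∀ z ∈ boolRes x, f z = false
  · left
    rw [if_pos h0, if_pos (fun z hz => h0 z (hs hz))]
  · rw [if_neg h0]
    by_cases h1 : ∀ z ∈ boolRes x, f z = true
    · left
      have h0' : ¬ ∀ z ∈ boolRes x', f z = false := by
        intro hf
        obtain ⟨z, hz⟩ := boolRes_nonempty x'
        have := h1 z (hs hz)
        rw [hf z hz] at this
        cases this
      rw [if_pos h1, if_neg h0', if_pos (fun z hz => h1 z (hs hz))]
    · rw [if_neg h1]
      exact Or.inr rfl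

lemma eval_mono {M : ℕ} {o o' : Fin M → BM} (h : inResM o o') (c : Comb M) :
    Comb.eval o c = Comb.eval o' c ∨ Comb.eval o c = BM.meta' := by
  induction c with
  | input i => exact h i
  | const b => exact Or.inl rfl
  | gate j f cs ih => exact kleene_mono f (fun t => ih t)

lemma evalLogic_mono (C : Circuit m k n) {o o' : Fin (m + k) → BM} (h : inResM o o') :
    inResM (evalLogic C o) (evalLogic C o') :=
  fun j => eval_mono h (C.logic j)

/-! ### Lifting pivotal steps to states -/

lemma pivStep_lift_w {ι : Fin m → BM} {a b : Fin (k + n) → BM} (h : pivStep a b) :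
    pivStep (Fin.append ι a) (Fin.append ι b) := by
  obtain ⟨j, h1, h2, h3⟩ := h
  refine ⟨Fin.natAdd m j, ?_, ?_, ?_⟩
  · rw [Fin.append_right, Fin.append_right]; exact h1
  · rw [Fin.append_right, Fin.append_right]; exact h2
  · intro j' hj'
    refine Fin.addCases (motive := fun j'' =>
        Fin.append ι a j'' ≠ Fin.append ι b j'' → j'' = Fin.natAdd m j) ?_ ?_ j' hj'
    · intro i hi
      rw [Fin.append_left, Fin.append_left] at hi
      exact absurd rfl hi
    · intro i hi
      rw [Fin.append_right, Fin.append_right] at hi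
      rw [h3 i hi]

lemma pivStep_lift_i {ι ι' : Fin m → BM} {a : Fin (k + n) → BM} {i0 : Fin m}
    (h1 : ι i0 ≠ ι' i0) (h2 : ι i0 = BM.meta' ∨ ι' i0 = BM.meta')
    (h3 : ∀ i, i ≠ i0 → ι i = ι' i) :
    pivStep (Fin.append ι a) (Fin.append ι' a) := by
  refine ⟨Fin.castAdd (k + n) i0, ?_, ?_, ?_⟩
  · rw [Fin.append_left, Fin.append_left]; exact h1
  · rw [Fin.append_left, Fin.append_left]; exact h2
  · intro j' hj'
    refine Fin.addCases (motive := fun j'' =>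
        Fin.append ι a j'' ≠ Fin.append ι' a j'' → j'' = Fin.castAdd (k + n) i0) ?_ ?_ j' hj'
    · intro i hi
      rw [Fin.append_left, Fin.append_left] at hi
      have : i = i0 := by
        by_contra hne
        exact hi (h3 i hne)
      rw [this]
    · intro i hi
      rw [Fin.append_right, Fin.append_right] at hi
      exact absurd rfl hi

/-! ### Decomposition of a pivotal step between states -/

lemma piv_decomp {u w : CState m k n} (h : pivStepL u.toVec w.toVec) :
    (∃ i0, u.inp i0 = BM.meta' ∧ u.inp i0 ≠ w.inp i0 ∧ (∀ i, i ≠ i0 → u.inp i = w.inp i) ∧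
      u.loc = w.loc ∧ u.out = w.out) ∨
    (∃ j0, u.loc j0 = BM.meta' ∧ u.loc j0 ≠ w.loc j0 ∧ (∀ j, j ≠ j0 → u.loc j = w.loc j) ∧
      u.inp = w.inp ∧ u.out = w.out) ∨
    (u.inp = w.inp ∧ u.loc = w.loc) := by
  obtain ⟨j, hne, hM, huniq⟩ := h
  have hval : ∀ j', u.toVec j' ≠ w.toVec j' → j' = j := huniq
  refine Fin.addCases (motive := fun jj => u.toVec jj ≠ w.toVec jj → u.toVec jj = BM.meta' →
      (∀ j', u.toVec j' ≠ w.toVec j' → j' = jj) → _) ?_ ?_ j hne hM hval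
  · -- input pivot
    intro i0 hne hM huniq
    simp only [toVec_inp] at hne hM
    refine Or.inl ⟨i0, hM, hne, ?_, ?_, ?_⟩
    · intro i hi
      by_contra hne'
      have := huniq (Fin.castAdd (k + n) i)
        (by rw [toVec_inp, toVec_inp]; exact hne')
      have hv := congrArg Fin.val this
      simp only [Fin.coe_castAdd] at hv
      exact hi (Fin.ext hv)
    · funext j1
      by_contra hne'
      have := huniq (Fin.natAdd m (Fin.castAdd n j1))
        (by rw [toVec_loc, toVec_loc]; exact hne')
      have hv := congrArg Fin.val this
      simp only [Fin.coe_castAdd, Fin.coe_natAdd] at hv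
      have := i0.isLt
      omega
    · funext j1
      by_contra hne'
      have := huniq (Fin.natAdd m (Fin.natAdd k j1))
        (by rw [toVec_out, toVec_out]; exact hne')
      have hv := congrArg Fin.val this
      simp only [Fin.coe_castAdd, Fin.coe_natAdd] at hv
      have := i0.isLt
      omega
  · intro r
    refine Fin.addCases (motive := fun rr => u.toVec (Fin.natAdd m rr) ≠ w.toVec (Fin.natAdd m rr) →
        u.toVec (Fin.natAdd m rr) = BM.meta' →
        (∀ j', u.toVec j' ≠ w.toVec j' → j' = Fin.natAdd m rr) → _) ?_ ?_ r
    · -- local pivot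
      intro j0 hne hM huniq
      simp only [toVec_loc] at hne hM
      refine Or.inr (Or.inl ⟨j0, hM, hne, ?_, ?_, ?_⟩)
      · intro j1 hj1
        by_contra hne'
        have := huniq (Fin.natAdd m (Fin.castAdd n j1))
          (by rw [toVec_loc, toVec_loc]; exact hne')
        have hv := congrArg Fin.val this
        simp only [Fin.coe_castAdd, Fin.coe_natAdd] at hv
        exact hj1 (Fin.ext (by omega))
      · funext i
        by_contra hne'
        have := huniq (Fin.castAdd (k + n) i)
          (by rw [toVec_inp, toVec_inp]; exact hne')
        have hv := congrArg Fin.val this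
        simp only [Fin.coe_castAdd, Fin.coe_natAdd] at hv
        have := i.isLt
        omega
      · funext j1
        by_contra hne'
        have := huniq (Fin.natAdd m (Fin.natAdd k j1))
          (by rw [toVec_out, toVec_out]; exact hne')
        have hv := congrArg Fin.val this
        simp only [Fin.coe_castAdd, Fin.coe_natAdd] at hv
        have := j0.isLt
        omega
    · -- output pivot
      intro j0 hne hM huniq
      refine Or.inr (Or.inr ⟨?_, ?_⟩)
      · funext i
        by_contra hne'
        have := huniq (Fin.castAdd (k + n) i)
          (by rw [toVec_inp, toVec_inp]; exact hne')
        have hv := congrArg Fin.val this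
        simp only [Fin.coe_castAdd, Fin.coe_natAdd] at hv
        have := i.isLt
        omega
      · funext j1
        by_contra hne'
        have := huniq (Fin.natAdd m (Fin.castAdd n j1))
          (by rw [toVec_loc, toVec_loc]; exact hne')
        have hv := congrArg Fin.val this
        simp only [Fin.coe_castAdd, Fin.coe_natAdd] at hv
        have := j1.isLt
        omega

end CircuitAux

section Segment

variable {m k n : ℕ}

lemma canRead_stable (t : RegType) {b : BM} (hb : b ≠ BM.meta') : canRead t b = b := by
  cases t <;> cases b <;> simp_all [canRead]

lemma pivC_lift_w {ι : Fin m → BM} {a b : Fin (k + n) → BM} (h : pivStep a b) :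
    pivStep (stateOf ι a : CState m k n).toVec (stateOf ι b).toVec := by
  rw [toVec_stateOf, toVec_stateOf]; exact pivStep_lift_w h

lemma segment_aux (C : Circuit m k n) (u w : CState m k n) (h : pivStepL u.toVec w.toVec) :
    ∃ L : List (CState m k n), L.Chain' (fun a b => pivStep a.toVec b.toVec) ∧
      L.head? = some (canSucc C u) ∧ L.getLast? = some (canSucc C w) ∧
      ∀ s ∈ L, Succ C u s ∨ Succ C w s := by
  rcases piv_decomp h with ⟨i0, hM, hne, hinp, hloc, hout⟩ |
    ⟨j0, hM, hne, hlocs, hinp, hout⟩ | ⟨hinp, hloc⟩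
  · -- INPUT pivot
    have hne0 : w.inp i0 ≠ BM.meta' := fun hh => hne (hM.trans hh.symm)
    by_cases hts : C.inType i0 = RegType.simple
    · -- simple input register
      have hres : inResM (canO C u) (canO C w) := by
        intro c
        refine Fin.addCases (fun i => ?_) (fun j => ?_) c
        · rw [canO, canO, Fin.append_left, Fin.append_left]
          by_cases hi : i = i0
          · subst hi; right; rw [hM, hts]; rfl
          · left; rw [hinp i hi]
        · left; rw [canO, canO, Fin.append_right, Fin.append_right, hloc]
      obtain ⟨l, hch, hh, hl, hm⟩ :=
        pathVia (canW C u) (canW C u) (canW C w) (inResM_refl _) (evalLogic_mono C hres)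
      have hlne : l ≠ [] := fun hh' => by rw [hh'] at hh; simp at hh
      refine ⟨l.map (stateOf u.inp) ++ [canSucc C w], ?_, ?_, ?_, ?_⟩
      · refine List.IsChain.append ?_ (List.isChain_singleton _) ?_
        · exact List.isChain_map_of_isChain (stateOf u.inp) (fun a b hab => pivC_lift_w hab) hch
        · intro p hp q hq
          rw [Option.mem_def, List.getLast?_map, hl] at hp
          have hp' : stateOf u.inp (canW C w) = p := by simpa using hp
          have hq' : canSucc C w = q := by simpa using hq
          rw [← hp', ← hq']
          show pivStep (stateOf u.inp (canW C w)).toVec (stateOf w.inp (canW C w)).toVec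
          rw [toVec_stateOf, toVec_stateOf]
          exact pivStep_lift_i hne (Or.inl hM) hinp
      · rw [List.head?_append_of_ne_nil _ (by simpa using hlne), List.head?_map, hh]; rfl
      · rw [List.getLast?_concat]
      · intro s hs
        rcases List.mem_append.mp hs with hs | hs
        · obtain ⟨a, ha, rfl⟩ := List.mem_map.mp hs
          exact Or.inl (succ_of C u (canO_readRel C u) (hm a ha))
        · have hs' : s = canSucc C w := by simpa using hs
          rw [hs']; exact Or.inr (succ_canSucc C w)
    · -- masking input register
      by_cases hA : w.inp i0 = canRead (C.inType i0) BM.meta'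
      · -- read value matches the stable value: canonical reads agree
        have hco : canO C u = canO C w := by
          funext c
          refine Fin.addCases (fun i => ?_) (fun j => ?_) c
          · rw [canO, canO, Fin.append_left, Fin.append_left]
            by_cases hi : i = i0
            · subst hi
              rw [hM, canRead_stable _ hne0, hA]
            · rw [hinp i hi]
          · rw [canO, canO, Fin.append_right, Fin.append_right, hloc]
        have hwsucc : canSucc C w = stateOf w.inp (canW C u) := by
          rw [canSucc, canW, canW, hco]
        refine ⟨[canSucc C u, canSucc C w], ?_, rfl, by simp, ?_⟩
        · refine List.isChain_cons_cons.mpr ⟨?_, List.isChain_singleton _⟩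
          rw [hwsucc]
          show pivStep (stateOf u.inp (canW C u)).toVec (stateOf w.inp (canW C u)).toVec
          rw [toVec_stateOf, toVec_stateOf]
          exact pivStep_lift_i hne (Or.inl hM) hinp
        · intro s hs
          rcases List.mem_cons.mp hs with hs | hs
          · rw [hs]; exact Or.inl (succ_canSucc C u)
          · have hs' : s = canSucc C w := by simpa using hs
            rw [hs']; exact Or.inr (succ_canSucc C w)
      · -- genuine mask flip: use the metastable read for register i0
        set oM : Fin (m + k) → BM := Function.update (canO C u) (Fin.castAdd k i0) BM.meta'
          with hoM
        have hRR : ReadRel C u oM w.inp := by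
          constructor
          · intro i
            by_cases hi : i = i0
            · subst hi
              rw [hoM, Function.update_self, hM]
              exact regRead_meta_flip _ _ hts hne0 hA
            · have hcoord : Fin.castAdd k i ≠ Fin.castAdd k i0 := by
                intro hh
                have hv := congrArg Fin.val hh
                simp only [Fin.coe_castAdd] at hv
                exact hi (Fin.ext hv)
              rw [hoM, Function.update_of_ne hcoord, canO, Fin.append_left, ← hinp i hi]
              exact regRead_canRead _ _
          · intro j
            have hcoord : Fin.natAdd m j ≠ Fin.castAdd k i0 := by
              intro hh
              have hv := congrArg Fin.val hh
              simp only [Fin.coe_natAdd, Fin.coe_castAdd] at hv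
              have := i0.isLt
              omega
            refine ⟨u.loc j, ?_⟩
            rw [hoM, Function.update_of_ne hcoord, canO, Fin.append_right]
            exact regRead_canRead _ _
        have hU : inResM oM (canO C u) := by
          intro c
          by_cases hc : c = Fin.castAdd k i0
          · subst hc; right; rw [hoM, Function.update_self]
          · left; rw [hoM, Function.update_of_ne hc]
        have hW : inResM oM (canO C w) := by
          intro c
          by_cases hc : c = Fin.castAdd k i0
          · subst hc; right; rw [hoM, Function.update_self]
          · rw [hoM, Function.update_of_ne hc]
            left
            refine Fin.addCases
              (motive := fun cc => cc ≠ Fin.castAdd k i0 → canO C u cc = canO C w cc)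
              (fun i hi => ?_) (fun j _ => ?_) c hc
            · have hii : i ≠ i0 := fun hh => hi (by rw [hh])
              rw [canO, canO, Fin.append_left, Fin.append_left, hinp i hii]
            · rw [canO, canO, Fin.append_right, Fin.append_right, hloc]
        obtain ⟨l, hch, hh, hl, hm⟩ := pathVia (evalLogic C oM) (canW C u) (canW C w)
          (evalLogic_mono C hU) (evalLogic_mono C hW)
        refine ⟨canSucc C u :: l.map (stateOf w.inp), ?_, rfl, ?_, ?_⟩
        · refine List.isChain_cons.mpr ⟨?_, ?_⟩
          · intro q hq
            rw [Option.mem_def, List.head?_map, hh] at hq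
            have hq' : stateOf w.inp (canW C u) = q := by simpa using hq
            rw [← hq']
            show pivStep (stateOf u.inp (canW C u)).toVec (stateOf w.inp (canW C u)).toVec
            rw [toVec_stateOf, toVec_stateOf]
            exact pivStep_lift_i hne (Or.inl hM) hinp
          · exact List.isChain_map_of_isChain (stateOf w.inp) (fun a b hab => pivC_lift_w hab) hch
        · cases l with
          | nil => simp at hh
          | cons a t =>
            rw [List.map_cons, List.getLast?_cons_cons, ← List.map_cons,
              List.getLast?_map, hl]
            rfl
        · intro s hs
          rcases List.mem_cons.mp hs with hs | hs
          · rw [hs]; exact Or.inl (succ_canSucc C u)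
          · obtain ⟨a, ha, rfl⟩ := List.mem_map.mp hs
            exact Or.inl (succ_of C u hRR (hm a ha))
  · -- LOCAL pivot
    set oM : Fin (m + k) → BM := Function.update (canO C u) (Fin.natAdd m j0) BM.meta'
      with hoM
    have hRR : ReadRel C u oM u.inp := by
      constructor
      · intro i
        have hcoord : Fin.castAdd k i ≠ Fin.natAdd m j0 := by
          intro hh
          have hv := congrArg Fin.val hh
          simp only [Fin.coe_natAdd, Fin.coe_castAdd] at hv
          have := i.isLt
          omega
        rw [hoM, Function.update_of_ne hcoord, canO, Fin.append_left]
        exact regRead_canRead _ _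
      · intro j
        by_cases hj : j = j0
        · subst hj
          rw [hoM, Function.update_self, hM]
          exact regRead_meta _
        · have hcoord : Fin.natAdd m j ≠ Fin.natAdd m j0 := by
            intro hh
            have hv := congrArg Fin.val hh
            simp only [Fin.coe_natAdd] at hv
            exact hj (Fin.ext (by omega))
          rw [hoM, Function.update_of_ne hcoord, canO, Fin.append_right]
          exact ⟨u.loc j, regRead_canRead _ _⟩
    have hU : inResM oM (canO C u) := by
      intro c
      by_cases hc : c = Fin.natAdd m j0
      · subst hc; right; rw [hoM, Function.update_self]
      · left; rw [hoM, Function.update_of_ne hc]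
    have hW : inResM oM (canO C w) := by
      intro c
      by_cases hc : c = Fin.natAdd m j0
      · subst hc; right; rw [hoM, Function.update_self]
      · rw [hoM, Function.update_of_ne hc]
        left
        refine Fin.addCases
          (motive := fun cc => cc ≠ Fin.natAdd m j0 → canO C u cc = canO C w cc)
          (fun i _ => ?_) (fun j hj => ?_) c hc
        · rw [canO, canO, Fin.append_left, Fin.append_left, hinp]
        · have hjj : j ≠ j0 := by
            intro hh
            exact hj (by rw [hh])
          rw [canO, canO, Fin.append_right, Fin.append_right, hlocs j hjj]
    obtain ⟨l, hch, hh, hl, hm⟩ := pathVia (evalLogic C oM) (canW C u) (canW C w)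
      (evalLogic_mono C hU) (evalLogic_mono C hW)
    refine ⟨l.map (stateOf u.inp), ?_, ?_, ?_, ?_⟩
    · exact List.isChain_map_of_isChain (stateOf u.inp) (fun a b hab => pivC_lift_w hab) hch
    · rw [List.head?_map, hh]; rfl
    · rw [List.getLast?_map, hl]
      show some (stateOf u.inp (canW C w)) = some (canSucc C w)
      rw [canSucc, hinp]
    · intro s hs
      obtain ⟨a, ha, rfl⟩ := List.mem_map.mp hs
      exact Or.inl (succ_of C u hRR (hm a ha))
  · -- OUTPUT pivot
    have hco : canO C u = canO C w := by
      rw [canO, canO, hinp, hloc]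
    have hcs : canSucc C u = canSucc C w := by
      rw [canSucc, canSucc, hinp, canW, canW, hco]
    refine ⟨[canSucc C u], List.isChain_singleton _, rfl, by simp [hcs], ?_⟩
    intro s hs
    have hs' : s = canSucc C u := by simpa using hs
    rw [hs']
    exact Or.inl (succ_canSucc C u)

lemma segPath (C : Circuit m k n) (u w : CState m k n) (h : pivStep u.toVec w.toVec) :
    ∃ L : List (CState m k n), L.Chain' (fun a b => pivStep a.toVec b.toVec) ∧
      L.head? = some (canSucc C u) ∧ L.getLast? = some (canSucc C w) ∧
      ∀ s ∈ L, Succ C u s ∨ Succ C w s := by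
  rcases pivStep_cases h with hL | hL
  · exact segment_aux C u w hL
  · obtain ⟨L, hch, hh, hl, hm⟩ := segment_aux C w u hL
    refine ⟨L.reverse, ?_, ?_, ?_, ?_⟩
    · exact List.isChain_reverse.mpr (hch.imp fun a b hab => pivStep_symm hab)
    · rw [List.head?_reverse]; exact hl
    · rw [List.getLast?_eq_head?_reverse, List.reverse_reverse]; exact hh
    · intro s hs
      exact (hm s (List.mem_reverse.mp hs)).symm

end Segment

section Main

variable {m k n : ℕ}

lemma glue {α : Type*} {R : α → α → Prop} {L S : List α} {a : α}
    (hL : L.Chain' R) (hS : S.Chain' R) (hl : L.getLast? = some a) (hs : S.head? = some a) :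
    (L ++ S.tail).Chain' R ∧ (L ++ S.tail).head? = L.head? ∧
      (L ++ S.tail).getLast? = S.getLast? ∧ ∀ x ∈ L ++ S.tail, x ∈ L ∨ x ∈ S := by
  have hLne : L ≠ [] := fun hh => by rw [hh] at hl; simp at hl
  cases S with
  | nil => simp at hs
  | cons b t =>
    have hb : b = a := by simpa using hs
    cases t with
    | nil =>
      refine ⟨by simpa using hL, by simp, ?_, ?_⟩
      · simp only [List.tail_cons, List.append_nil]
        rw [hl, hb]
        simp
      · intro x hx
        exact Or.inl (by simpa using hx)
    | cons c t' =>
      refine ⟨?_, ?_, ?_, ?_⟩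
      · refine List.IsChain.append hL ((List.isChain_cons.mp hS).2) ?_
        intro p hp q hq
        rw [Option.mem_def, hl] at hp
        have hp' : a = p := by simpa using hp
        have hq' : c = q := by simpa using hq
        subst hb
        rw [← hp', ← hq']
        exact (List.isChain_cons_cons.mp hS).1
      · exact List.head?_append_of_ne_nil _ hLne
      · rw [List.tail_cons, List.getLast?_append_of_ne_nil _ (by simp),
          List.getLast?_cons_cons]
      · intro x hx
        rcases List.mem_append.mp hx with hx | hx
        · exact Or.inl hx
        · exact Or.inr (List.mem_of_mem_tail (by simpa using hx))

lemma main_list (C : Circuit m k n) :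
    ∀ (ℓ : ℕ) (x : Fin (ℓ + 1) → CState m k n),
    PivotalSeq (fun i => (x i).toVec) →
    ∃ L : List (CState m k n), L.Chain' (fun a b => pivStep a.toVec b.toVec) ∧
      L.head? = some (canSucc C (x 0)) ∧ L.getLast? = some (canSucc C (x (Fin.last ℓ))) ∧
      ∀ s ∈ L, ∃ i, Succ C (x i) s := by
  intro ℓ
  induction ℓ with
  | zero =>
    intro x hx
    refine ⟨[canSucc C (x 0)], List.isChain_singleton _, rfl, by simp [Fin.last], ?_⟩
    intro s hs
    have hs' : s = canSucc C (x 0) := by simpa using hs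
    rw [hs']
    exact ⟨0, succ_canSucc C (x 0)⟩
  | succ ℓ ih =>
    intro x hx
    have hres : PivotalSeq (fun i => ((x (Fin.castSucc i)).toVec)) := by
      intro i
      have := hx (Fin.castSucc i)
      exact this
    obtain ⟨L, hch, hh, hl, hm⟩ := ih (fun i => x i.castSucc) hres
    have hstep : pivStep (x (Fin.castSucc (Fin.last ℓ))).toVec (x (Fin.last (ℓ + 1))).toVec := by
      have := hx (Fin.last ℓ)
      rw [Fin.succ_last] at this
      exact this
    obtain ⟨S, hchS, hhS, hlS, hmS⟩ := segPath C _ _ hstep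
    have hglue := glue hch hchS hl hhS
    refine ⟨L ++ S.tail, hglue.1, ?_, ?_, ?_⟩
    · rw [hglue.2.1, hh, Fin.castSucc_zero]
    · rw [hglue.2.2.1, hlS]
    · intro s hs
      rcases hglue.2.2.2 s hs with hs | hs
      · obtain ⟨i, hi⟩ := hm s hs
        exact ⟨i.castSucc, hi⟩
      · rcases hmS s hs with hsu | hsw
        · exact ⟨Fin.castSucc (Fin.last ℓ), hsu⟩
        · exact ⟨Fin.last (ℓ + 1), hsw⟩

end Main

/-- given a pivotal sequence `(x^(i))_{i ∈ [ℓ+1]}` of states of a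
circuit `C`, there is a pivotal sequence `(y^(j))_{j ∈ [ℓ'+1]}` of states such that
each `y^(j)` is a successor state of some `x^(i)`, `y^(0)` is a successor state of
`x^(0)`, and `y^(ℓ')` is a successor state of `x^(ℓ)`. -/
theorem pivotal_successor_sequence {m k n ℓ : ℕ} (C : Circuit m k n)
    (x : Fin (ℓ + 1) → CState m k n)
    (hx : PivotalSeq (fun i => (x i).toVec)) :
    ∃ ℓ' : ℕ, ∃ y : Fin (ℓ' + 1) → CState m k n,
      PivotalSeq (fun j => (y j).toVec) ∧
      (∀ j, ∃ i, Succ C (x i) (y j)) ∧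
      Succ C (x 0) (y 0) ∧ Succ C (x (Fin.last ℓ)) (y (Fin.last ℓ')) := by
  obtain ⟨L, hch, hh, hl, hm⟩ := main_list C ℓ x hx
  have hLne : L ≠ [] := fun hh' => by rw [hh'] at hh; simp at hh
  have hlen : 1 ≤ L.length := List.length_pos_iff.mpr hLne
  refine ⟨L.length - 1, fun j => L.get ⟨j.val, by have := j.isLt; omega⟩, ?_, ?_, ?_, ?_⟩
  · intro i
    exact List.isChain_iff_getElem.mp hch i.val (by omega)
  · intro j
    exact hm _ (by apply List.get_mem)
  · have h0 : L.get ⟨0, by omega⟩ = canSucc C (x 0) := by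
      cases L with
      | nil => exact absurd rfl hLne
      | cons b t => simpa using hh
    show Succ C (x 0) (L.get ⟨0, by omega⟩)
    rw [h0]
    exact succ_canSucc C (x 0)
  · have h1 : L.getLast hLne = canSucc C (x (Fin.last ℓ)) := by
      rw [List.getLast?_eq_getLast_of_ne_nil hLne] at hl
      exact Option.some.inj hl
    have hlast : L.get ⟨L.length - 1, by omega⟩ = canSucc C (x (Fin.last ℓ)) := by
      rw [← h1, List.getLast_eq_getElem]
      rfl
    show Succ C (x (Fin.last ℓ)) (L.get ⟨L.length - 1, by omega⟩)
    rw [hlast]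
    exact succ_canSucc C (x (Fin.last ℓ))
end

section
/- Metastability cannot be detected: there exists no circuit that implements the function f : BM → Pow(BM) with f(M) = {1} and f(x) = {0} for x ∈ {0, 1}. -/
set_option linter.unusedVariables false

attribute [local instance] Classical.propDecidable

/-- The metastability detector specification: output `1` iff the input is `meta`. -/
def detectSpec : (Fin 1 → BM) → Set (Fin 1 → BM) := fun x =>
  if x 0 = BM.meta' then {fun _ => BM.one} else {fun _ => BM.zero}


/-- Information order on `BM`: `a ≤ b` iff `a = b` or `a = meta`. -/
def BM.le (a b : BM) : Prop := a = b ∨ a = BM.meta'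

lemma boolRes_subset {k : ℕ} {x y : Fin k → BM} (h : ∀ i, BM.le (x i) (y i)) :
    boolRes y ⊆ boolRes x := by
  intro z hz i
  rcases h i with h' | h'
  · rw [h']; exact hz i
  · exact Or.inr h'

lemma boolRes_nonempty_s9 {k : ℕ} (x : Fin k → BM) : (boolRes x).Nonempty := by
  refine ⟨fun i => if x i = BM.one then true else false, fun i => ?_⟩
  cases h : x i <;> simp [h, BM.ofBool]

lemma kleene_mono_s9 {k : ℕ} (f : (Fin k → Bool) → Bool) {x y : Fin k → BM}
    (h : ∀ i, BM.le (x i) (y i)) : BM.le (kleene f x) (kleene f y) := by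
  have hsub := boolRes_subset h
  unfold kleene
  by_cases h0 : ∀ z ∈ boolRes x, f z = false
  · have h0' : ∀ z ∈ boolRes y, f z = false := fun z hz => h0 z (hsub hz)
    rw [if_pos h0, if_pos h0']
    exact Or.inl rfl
  · by_cases h1 : ∀ z ∈ boolRes x, f z = true
    · have h1' : ∀ z ∈ boolRes y, f z = true := fun z hz => h1 z (hsub hz)
      have h0' : ¬ ∀ z ∈ boolRes y, f z = false := by
        obtain ⟨z, hz⟩ := boolRes_nonempty_s9 y
        intro hc
        have := hc z hz
        have := h1' z hz
        simp_all
      rw [if_neg h0, if_neg h0', if_pos h1, if_pos h1']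
      exact Or.inl rfl
    · rw [if_neg h0, if_neg h1]
      exact Or.inr rfl

lemma eval_mono_s9 {m : ℕ} {x y : Fin m → BM} (h : ∀ i, BM.le (x i) (y i)) :
    ∀ c : Comb m, BM.le (c.eval x) (c.eval y) := by
  intro c
  induction c with
  | input i => exact h i
  | const b => exact Or.inl rfl
  | gate j f cs ih =>
      simp only [Comb.eval]
      exact kleene_mono_s9 f (fun t => ih t)

/-- Canonical read: stay in the same state. -/
def rdV : RegType → BM → BM
  | _, BM.zero => BM.zero
  | _, BM.one => BM.one
  | RegType.simple, BM.meta' => BM.meta'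
  | RegType.mask0, BM.meta' => BM.zero
  | RegType.mask1, BM.meta' => BM.one

lemma regRead_rd (t : RegType) (b : BM) : regRead t b (rdV t b, b) := by
  cases t <;> cases b <;> simp [regRead, rdV]

/-- Adversarial read for the M-run input register: make the read value `≤ 0`. -/
def irdV : RegType → BM → BM
  | _, BM.zero => BM.zero
  | _, BM.one => BM.one
  | RegType.simple, BM.meta' => BM.meta'
  | RegType.mask0, BM.meta' => BM.zero
  | RegType.mask1, BM.meta' => BM.meta'

def irdS : RegType → BM → BM
  | _, BM.zero => BM.zero
  | _, BM.one => BM.one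
  | RegType.simple, BM.meta' => BM.meta'
  | RegType.mask0, BM.meta' => BM.meta'
  | RegType.mask1, BM.meta' => BM.zero

lemma regRead_ird (t : RegType) (b : BM) : regRead t b (irdV t b, irdS t b) := by
  cases t <;> cases b <;> simp [regRead, irdV, irdS]

lemma append_parts {k n : ℕ} (w : Fin (k + n) → BM) :
    Fin.append (fun j => w (Fin.castAdd n j)) (fun j => w (Fin.natAdd k j)) = w := by
  funext i
  refine Fin.addCases (fun j => ?_) (fun j => ?_) i
  · simp [Fin.append_left]
  · simp [Fin.append_right]

lemma key_sim (k : ℕ) (C : Circuit 1 k 1) (r : ℕ) :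
    ∃ sM ∈ reach C r (initState C (fun _ => BM.meta')),
    ∃ s0 ∈ reach C r (initState C (fun _ => BM.zero)),
      sM.loc = s0.loc ∧ sM.out = s0.out ∧
      (∀ i, sM.inp i = BM.zero ∨ sM.inp i = BM.meta') ∧
      (∀ i, s0.inp i = BM.zero) := by
  induction r with
  | zero =>
      refine ⟨initState C (fun _ => BM.meta'), rfl,
        initState C (fun _ => BM.zero), rfl, rfl, rfl, ?_, ?_⟩
      · intro i; exact Or.inr rfl
      · intro i; rfl
  | succ r ih =>
      obtain ⟨sM, hsM, s0, hs0, hloc, hout, hMinp, h0inp⟩ := ih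
      -- read values
      set o0 : Fin (1 + k) → BM :=
        Fin.addCases (fun i => rdV (C.inType i) (s0.inp i))
          (fun j => rdV (C.locType j) (s0.loc j)) with ho0
      set oM : Fin (1 + k) → BM :=
        Fin.addCases (fun i => irdV (C.inType i) (sM.inp i))
          (fun j => rdV (C.locType j) (sM.loc j)) with hoM
      have hread0 : ReadRel C s0 o0 (fun i => s0.inp i) := by
        constructor
        · intro i
          simp only [ho0, Fin.addCases_left]
          exact regRead_rd _ _
        · intro j
          refine ⟨s0.loc j, ?_⟩
          simp only [ho0, Fin.addCases_right]
          exact regRead_rd _ _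
      have hreadM : ReadRel C sM oM (fun i => irdS (C.inType i) (sM.inp i)) := by
        constructor
        · intro i
          simp only [hoM, Fin.addCases_left]
          exact regRead_ird _ _
        · intro j
          refine ⟨sM.loc j, ?_⟩
          simp only [hoM, Fin.addCases_right]
          exact regRead_rd _ _
      have hle : ∀ i, BM.le (oM i) (o0 i) := by
        intro i
        refine Fin.addCases (fun i => ?_) (fun j => ?_) i
        · simp only [hoM, ho0, Fin.addCases_left]
          rcases hMinp i with h | h <;> rw [h, h0inp i] <;>
            cases ht : C.inType i <;> simp [irdV, rdV, BM.le]
        · simp only [hoM, ho0, Fin.addCases_right, hloc]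
          exact Or.inl rfl
      set w : Fin (k + 1) → BM := evalLogic C o0 with hw
      have hmono : inResM (evalLogic C oM) w := by
        intro j
        exact eval_mono_s9 hle (C.logic j)
      refine ⟨⟨fun i => irdS (C.inType i) (sM.inp i),
          fun j => w (Fin.castAdd 1 j), fun j => w (Fin.natAdd k j)⟩,
        ⟨sM, hsM, oM, _, hreadM, rfl, ?_⟩,
        ⟨fun i => s0.inp i,
          fun j => w (Fin.castAdd 1 j), fun j => w (Fin.natAdd k j)⟩,
        ⟨s0, hs0, o0, _, hread0, rfl, ?_⟩, rfl, rfl, ?_, ?_⟩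
      · show inResM (evalLogic C oM) (Fin.append _ _)
        rw [append_parts]
        exact hmono
      · show inResM (evalLogic C o0) (Fin.append _ _)
        rw [append_parts]
        intro j; exact Or.inl rfl
      · intro i
        have hh : irdS (C.inType i) (sM.inp i) = BM.zero ∨
            irdS (C.inType i) (sM.inp i) = BM.meta' := by
          rcases hMinp i with h | h <;> rw [h] <;> cases C.inType i <;> simp [irdS]
        exact hh
      · intro i
        simp [h0inp i]

/-- metastability cannot be detected: no circuit implements
`f(M) = {1}`, `f(x) = {0}` for `x ∈ {0,1}` (in any number `r ≥ 1` of rounds). -/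
theorem no_metastability_detector :
    ¬ ∃ (k r : ℕ) (C : Circuit 1 k 1), 0 < r ∧ Implements C r detectSpec := by
  rintro ⟨k, r, C, hr, himpl⟩
  obtain ⟨sM, hsM, s0, hs0, hloc, hout, hMinp, h0inp⟩ := key_sim k C r
  have hM : sM.out ∈ detectSpec (fun _ => BM.meta') := himpl _ ⟨sM, hsM, rfl⟩
  have h0 : s0.out ∈ detectSpec (fun _ => BM.zero) := himpl _ ⟨s0, hs0, rfl⟩
  have hM' : sM.out = fun _ => BM.one := by simpa [detectSpec] using hM
  have h0' : s0.out = fun _ => BM.zero := by simpa [detectSpec] using h0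
  have hcontra := congrFun ((hM'.symm.trans hout).trans h0') 0
  simp at hcontra
end
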